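/- For n ≥ r ≥ 1, consider the n×n block-diagonal matrix L consisting of r diagonal blocks, each equal to the (n/r)×(n/r) all-ones matrix (assume r divides n). Then L has rank r, is μ-incoherent with μ = 1 (each row of the eigenvector matrix has norm √(r/n)), and there exists a matrix S with at most n/r nonzero entries per row and column (i.e., fraction α = 1/r) such that L + S has rank r − 1. -/

import Mathlib

open Matrix


lemma aux_div_eq_iff (a m k : ℕ) (hm : 0 < m) : a / m = k ↔ k * m ≤ a ∧ a < (k+1) * m := by
  constructor
  · rintro rfl
    exact ⟨Nat.div_mul_le_self a m, by rw [← Nat.div_lt_iff_lt_mul hm]; omega⟩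
  · rintro ⟨h1, h2⟩
    exact Nat.div_eq_of_lt_le h1 h2

lemma aux_card {n m k : ℕ} (hm : 0 < m) (hk : (k+1)*m ≤ n) :
    (Finset.univ.filter (fun i : Fin n => i.val / m = k)).card = m := by
  have h1 : (Finset.univ.filter (fun i : Fin n => i.val / m = k)).card
      = ((Finset.range n).filter (fun i => i / m = k)).card := by
    rw [Finset.card_filter, Finset.card_filter,
      ← Fin.sum_univ_eq_sum_range (fun i => if i / m = k then 1 else 0) n]
  have h2 : (Finset.range n).filter (fun i => i / m = k) = Finset.Ico (k*m) ((k+1)*m) := by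
    ext i
    simp only [Finset.mem_filter, Finset.mem_range, Finset.mem_Ico, aux_div_eq_iff _ _ _ hm]
    omega
  rw [h1, h2, Nat.card_Ico]
  ring_nf
  omega

lemma aux_rank {n k : ℕ} (A : Matrix (Fin n) (Fin n) ℝ) (U : Matrix (Fin n) (Fin k) ℝ)
    (D : Fin k → ℝ) (hA : A = U * diagonal D * Uᵀ) (hU : Uᵀ * U = 1)
    (hD : ∀ i, D i ≠ 0) : A.rank = k := by
  have h1 : A.rank ≤ k := by
    calc A.rank ≤ Uᵀ.rank := by rw [hA]; exact rank_mul_le_right _ _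
    _ ≤ k := (rank_le_card_height _).trans (by simp)
  have hdiag : diagonal D = Uᵀ * A * U := by
    rw [hA]
    calc diagonal D = (Uᵀ * U) * diagonal D * (Uᵀ * U) := by rw [hU]; simp
    _ = Uᵀ * (U * diagonal D * Uᵀ) * U := by simp only [Matrix.mul_assoc]
  have h2 : k ≤ A.rank := by
    have hdr : (diagonal D).rank = k := by
      rw [rank_diagonal]
      simp only [Fintype.card_subtype]
      rw [Finset.filter_true_of_mem (fun i _ => hD i)]
      simp
    calc k = (diagonal D).rank := hdr.symm
    _ = (Uᵀ * (A * U)).rank := by rw [hdiag, Matrix.mul_assoc]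
    _ ≤ (A * U).rank := rank_mul_le_right _ _
    _ ≤ A.rank := rank_mul_le_left _ _
  omega

lemma aux_ortho {n q m : ℕ} (hm : 0 < m) (a : Fin q → ℕ) (ha : Function.Injective a)
    (hq : ∀ t, (a t + 1) * m ≤ n)
    (V : Matrix (Fin n) (Fin q) ℝ)
    (hV : ∀ i t, V i t = if i.val / m = a t then (Real.sqrt m)⁻¹ else 0) :
    Vᵀ * V = 1 := by
  have hm' : (0:ℝ) < m := by exact_mod_cast hm
  ext s t
  simp only [Matrix.mul_apply, Matrix.transpose_apply, hV, Matrix.one_apply]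
  by_cases hst : s = t
  · subst hst
    rw [if_pos rfl]
    have hcong : ∀ i ∈ (Finset.univ : Finset (Fin n)),
        (if i.val / m = a s then (Real.sqrt m)⁻¹ else 0) *
          (if i.val / m = a s then (Real.sqrt m)⁻¹ else 0)
          = if i.val / m = a s then (Real.sqrt m)⁻¹ * (Real.sqrt m)⁻¹ else 0 := by
      intro i _
      by_cases h : i.val / m = a s <;> simp [h]
    rw [Finset.sum_congr rfl hcong]
    rw [← Finset.sum_filter, Finset.sum_const, aux_card hm (hq s), nsmul_eq_mul,
      ← mul_inv, Real.mul_self_sqrt hm'.le]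
    field_simp
  · rw [if_neg hst]
    apply Finset.sum_eq_zero
    intro i _
    by_cases h : i.val / m = a s
    · rw [if_pos h, if_neg (fun h' => hst (ha (h.symm.trans h')))]
      ring
    · rw [if_neg h, zero_mul]

lemma aux_entry {n q m : ℕ} (hm : 0 < m) (a : Fin q → ℕ) (ha : Function.Injective a)
    (V : Matrix (Fin n) (Fin q) ℝ)
    (hV : ∀ i t, V i t = if i.val / m = a t then (Real.sqrt m)⁻¹ else 0)
    (i j : Fin n) :
    (V * diagonal (fun _ : Fin q => (m:ℝ)) * Vᵀ) i j
      = if i.val / m = j.val / m ∧ ∃ t, i.val / m = a t then 1 else 0 := by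
  have hm' : (0:ℝ) < m := by exact_mod_cast hm
  have hc : (Real.sqrt m)⁻¹ * ((m:ℝ) * (Real.sqrt m)⁻¹) = 1 := by
    rw [show ((m:ℝ)) = Real.sqrt m * Real.sqrt m from (Real.mul_self_sqrt hm'.le).symm]
    have : Real.sqrt m ≠ 0 := by positivity
    field_simp
    rw [Real.sqrt_sq (Real.sqrt_nonneg _)]
  rw [Matrix.mul_assoc, Matrix.mul_apply]
  have hcong : ∀ t ∈ (Finset.univ : Finset (Fin q)),
      V i t * ((diagonal (fun _ : Fin q => (m:ℝ)) * Vᵀ) t j)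
        = if i.val / m = a t ∧ j.val / m = a t then (1:ℝ) else 0 := by
    intro t _
    rw [Matrix.diagonal_mul, Matrix.transpose_apply, hV, hV]
    by_cases h1 : i.val / m = a t <;> by_cases h2 : j.val / m = a t <;>
      simp [h1, h2, hc]
  rw [Finset.sum_congr rfl hcong]
  by_cases h : i.val / m = j.val / m ∧ ∃ t, i.val / m = a t
  · obtain ⟨hij, t0, ht0⟩ := h
    rw [if_pos ⟨hij, t0, ht0⟩, Finset.sum_eq_single t0]
    · rw [if_pos ⟨ht0, hij ▸ ht0⟩]
    · intro t _ hne
      rw [if_neg]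
      rintro ⟨h1, _⟩
      exact hne (ha (ht0.symm.trans h1)).symm
    · simp
  · rw [if_neg h]
    apply Finset.sum_eq_zero
    intro t _
    rw [if_neg]
    rintro ⟨h1, h2⟩
    exact h ⟨h1.trans h2.symm, t, h1⟩

/-- Tightness example: the `n × n` block-diagonal matrix `L` with `r` diagonal
blocks equal to the `(n/r) × (n/r)` all-ones matrix has rank `r`, is
`1`-incoherent (it admits an eigendecomposition `L = U Σ Uᵀ` with orthonormal
columns whose rows all have Euclidean norm `√r/√n`), and there is a matrix `S`
with at most `n/r` nonzero entries per row and per column (sparsity fraction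
`1/r`) such that `L + S` has rank `r − 1`. -/
theorem tightness_example (n r : ℕ) (hr : 1 ≤ r) (hrn : r ≤ n) (hdvd : r ∣ n)
    (L : Matrix (Fin n) (Fin n) ℝ)
    (hL : ∀ i j : Fin n, L i j = if i.val / (n / r) = j.val / (n / r) then 1 else 0) :
    L.rank = r ∧
    (∃ (U : Matrix (Fin n) (Fin r) ℝ) (D : Fin r → ℝ),
      L = U * Matrix.diagonal D * Uᵀ ∧ Uᵀ * U = 1 ∧
      ∀ i : Fin n, Real.sqrt (∑ k, (U i k) ^ 2) = Real.sqrt r / Real.sqrt n) ∧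
    (∃ S : Matrix (Fin n) (Fin n) ℝ,
      (∀ i, ({j | S i j ≠ 0} : Set (Fin n)).ncard ≤ n / r) ∧
      (∀ j, ({i | S i j ≠ 0} : Set (Fin n)).ncard ≤ n / r) ∧
      (L + S).rank = r - 1) := by
  obtain ⟨m, hnrm⟩ := hdvd
  have hmdef : n / r = m := by rw [hnrm, Nat.mul_div_cancel_left m (by omega)]
  simp only [hmdef] at hL
  have hm : 0 < m := by
    rcases Nat.eq_zero_or_pos m with h | h
    · subst h; simp at hnrm; omega
    · exact h
  have hm' : (0:ℝ) < m := by exact_mod_cast hm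
  have hdivlt : ∀ i : Fin n, i.val / m < r := by
    intro i
    rw [Nat.div_lt_iff_lt_mul hm]
    have := i.isLt
    omega
  -- U
  set U : Matrix (Fin n) (Fin r) ℝ :=
    Matrix.of (fun i k => if i.val / m = (k : Fin r).val then (Real.sqrt m)⁻¹ else 0) with hU_def
  have hUe : ∀ (i : Fin n) (t : Fin r),
      U i t = if i.val / m = (Fin.val t) then (Real.sqrt m)⁻¹ else 0 := fun i t => rfl
  have hainj : Function.Injective (Fin.val : Fin r → ℕ) := Fin.val_injective
  have haq : ∀ t : Fin r, ((Fin.val t) + 1) * m ≤ n := by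
    intro t
    have := t.isLt
    calc (t.val + 1) * m ≤ r * m := Nat.mul_le_mul_right m (by omega)
    _ = n := hnrm.symm
  have hortho : Uᵀ * U = 1 := aux_ortho hm _ hainj haq U hUe
  have hdecomp : L = U * diagonal (fun _ : Fin r => (m:ℝ)) * Uᵀ := by
    ext i j
    rw [hL, aux_entry hm _ hainj U hUe i j]
    congr 1
    simp only [eq_iff_iff]
    constructor
    · intro h
      exact ⟨h, ⟨⟨i.val / m, hdivlt i⟩, rfl⟩⟩
    · rintro ⟨h, -⟩
      exact h
  have hrank : L.rank = r :=
    aux_rank L U _ hdecomp hortho (fun i => ne_of_gt hm')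
  refine ⟨hrank, ⟨U, fun _ => (m:ℝ), hdecomp, hortho, ?_⟩, ?_⟩
  · -- row norms
    intro i
    have hsum : (∑ k, (U i k) ^ 2) = (m:ℝ)⁻¹ := by
      have hcong : ∀ k ∈ (Finset.univ : Finset (Fin r)),
          (U i k)^2 = if (⟨i.val / m, hdivlt i⟩ : Fin r) = k then (m:ℝ)⁻¹ else 0 := by
        intro k _
        rw [hUe]
        by_cases h : i.val / m = k.val
        · rw [if_pos h, if_pos (Fin.ext h), sq, ← mul_inv, Real.mul_self_sqrt hm'.le]
        · rw [if_neg h, if_neg (fun h' => h (congrArg Fin.val h')), zero_pow two_ne_zero]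
      rw [Finset.sum_congr rfl hcong, Finset.sum_ite_eq, if_pos (Finset.mem_univ _)]
    rw [hsum]
    have hr' : (0:ℝ) < r := by exact_mod_cast hr
    have hcast : (n:ℝ) = (r:ℝ) * (m:ℝ) := by exact_mod_cast congrArg (Nat.cast : ℕ → ℝ) hnrm
    rw [Real.sqrt_inv, hcast, Real.sqrt_mul hr'.le]
    rw [div_mul_eq_div_div, div_self (by positivity), one_div]
  · -- sparse part
    set S : Matrix (Fin n) (Fin n) ℝ :=
      Matrix.of (fun i j => if i.val / m = 0 ∧ j.val / m = 0 then (-1:ℝ) else 0) with hS_def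
    have hSe : ∀ i j : Fin n,
        S i j = if i.val / m = 0 ∧ j.val / m = 0 then (-1:ℝ) else 0 := fun i j => rfl
    have hcard0 : (Finset.univ.filter (fun j : Fin n => j.val / m = 0)).card = m :=
      aux_card hm (by simpa using haq ⟨0, by omega⟩)
    have hrow : ∀ i : Fin n, ({j | S i j ≠ 0} : Set (Fin n)).ncard ≤ m := by
      intro i
      have hsub : ({j | S i j ≠ 0} : Set (Fin n))
          ⊆ ↑(Finset.univ.filter (fun j : Fin n => j.val / m = 0)) := by
        intro j hj
        simp only [Set.mem_setOf_eq, hSe] at hj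
        simp only [Finset.coe_filter, Set.mem_setOf_eq, Finset.mem_univ, true_and]
        by_contra h
        exact hj (if_neg (fun hc => h hc.2))
      calc ({j | S i j ≠ 0} : Set (Fin n)).ncard
          ≤ (↑(Finset.univ.filter (fun j : Fin n => j.val / m = 0)) : Set (Fin n)).ncard :=
            Set.ncard_le_ncard hsub (Finset.finite_toSet _)
      _ = m := by rw [Set.ncard_coe_finset, hcard0]
    have hcol : ∀ j : Fin n, ({i | S i j ≠ 0} : Set (Fin n)).ncard ≤ m := by
      intro j
      have hsub : ({i | S i j ≠ 0} : Set (Fin n))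
          ⊆ ↑(Finset.univ.filter (fun i : Fin n => i.val / m = 0)) := by
        intro i hi
        simp only [Set.mem_setOf_eq, hSe] at hi
        simp only [Finset.coe_filter, Set.mem_setOf_eq, Finset.mem_univ, true_and]
        by_contra h
        exact hi (if_neg (fun hc => h hc.1))
      calc ({i | S i j ≠ 0} : Set (Fin n)).ncard
          ≤ (↑(Finset.univ.filter (fun i : Fin n => i.val / m = 0)) : Set (Fin n)).ncard :=
            Set.ncard_le_ncard hsub (Finset.finite_toSet _)
      _ = m := by rw [Set.ncard_coe_finset, hcard0]
    -- U' for L + S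
    set U' : Matrix (Fin n) (Fin (r-1)) ℝ :=
      Matrix.of (fun i t => if i.val / m = (t : Fin (r-1)).val + 1 then (Real.sqrt m)⁻¹ else 0)
      with hU'_def
    have hU'e : ∀ (i : Fin n) (t : Fin (r-1)),
        U' i t = if i.val / m = ((fun t : Fin (r-1) => t.val + 1) t)
          then (Real.sqrt m)⁻¹ else 0 := fun i t => rfl
    have hainj' : Function.Injective (fun t : Fin (r-1) => t.val + 1) := by
      intro s t h
      simp only at h
      exact Fin.ext (by omega)
    have haq' : ∀ t : Fin (r-1), ((fun t : Fin (r-1) => t.val + 1) t + 1) * m ≤ n := by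
      intro t
      have := t.isLt
      simp only
      calc (t.val + 1 + 1) * m ≤ r * m := Nat.mul_le_mul_right m (by omega)
      _ = n := hnrm.symm
    have hortho' : U'ᵀ * U' = 1 := aux_ortho hm _ hainj' haq' U' hU'e
    have hdecomp' : L + S = U' * diagonal (fun _ : Fin (r-1) => (m:ℝ)) * U'ᵀ := by
      ext i j
      rw [Matrix.add_apply, hL, hSe, aux_entry hm _ hainj' U' hU'e i j]
      have hiff : (i.val / m = j.val / m ∧ ∃ t : Fin (r-1), i.val / m = t.val + 1)
          ↔ (i.val / m = j.val / m ∧ i.val / m ≠ 0) := by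
        constructor
        · rintro ⟨h1, t, h2⟩
          exact ⟨h1, by omega⟩
        · rintro ⟨hh1, hh2⟩
          have hlt := hdivlt i
          refine ⟨hh1, ⟨⟨i.val / m - 1, ?_⟩, ?_⟩⟩
          · exact Nat.sub_lt_sub_right (Nat.one_le_iff_ne_zero.mpr hh2) hlt
          · exact (Nat.succ_pred_eq_of_pos (Nat.pos_of_ne_zero hh2)).symm
      rw [if_congr hiff rfl rfl]
      by_cases h1 : i.val / m = j.val / m
      · by_cases h2 : i.val / m = 0
        · rw [if_pos h1, if_pos ⟨h2, h1 ▸ h2⟩, if_neg (by tauto)]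
          ring
        · rw [if_pos h1, if_neg (by tauto), if_pos ⟨h1, h2⟩]
          ring
      · rw [if_neg h1, if_neg (fun hc => h1 (hc.1.trans hc.2.symm)),
          if_neg (fun hc => h1 hc.1)]
        ring
    have hrank' : (L + S).rank = r - 1 :=
      aux_rank (L + S) U' _ hdecomp' hortho' (fun i => ne_of_gt hm')
    exact ⟨S, fun i => by rw [hmdef]; exact hrow i,
      fun j => by rw [hmdef]; exact hcol j, hrank'⟩
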